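/- Let m > n be positive integers, ψ(x,y) = -cos(mx)cos(ny), and define f(x,y) = cos(x)·(1 + a₀·cos(2mx) + b₀·cos(2ny)) with a₀ = −(4m²+1)/(16m⁴+24m²+1) and b₀ = 1/(4n²+1). Then φ = {ψ, f} satisfies MI(φ) = ∫₀^{2π}∫₀^{2π} ((∂ₓφ)² + (∂_yφ)² − (m²+n²)φ²) dx dy < 0. -/

import Mathlib

open Real MeasureTheory

/-- Partial derivative in the first variable of a curried function `ℝ → ℝ → ℝ`. -/
noncomputable def pdx (φ : ℝ → ℝ → ℝ) (x y : ℝ) : ℝ := deriv (fun t => φ t y) x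

/-- Partial derivative in the second variable of a curried function `ℝ → ℝ → ℝ`. -/
noncomputable def pdy (φ : ℝ → ℝ → ℝ) (x y : ℝ) : ℝ := deriv (fun t => φ x t) y

/-- Poisson bracket `{ψ, f} = ∂ₓψ ∂_y f − ∂_y ψ ∂ₓ f`. -/
noncomputable def pb (ψ f : ℝ → ℝ → ℝ) : ℝ → ℝ → ℝ :=
  fun x y => pdx ψ x y * pdy f x y - pdy ψ x y * pdx f x y

/-- Misiołek index with coefficient `lam2` (usually `m² + n²`):
`∫₀^{2π}∫₀^{2π} ((∂ₓφ)² + (∂_yφ)² − lam2·φ²) dx dy`. -/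
noncomputable def MI (lam2 : ℝ) (φ : ℝ → ℝ → ℝ) : ℝ :=
  ∫ y in (0:ℝ)..(2 * π), ∫ x in (0:ℝ)..(2 * π),
    ((pdx φ x y) ^ 2 + (pdy φ x y) ^ 2 - lam2 * (φ x y) ^ 2)

set_option maxHeartbeats 1000000


lemma ii_cos (k a b : ℝ) : IntervalIntegrable (fun x => Real.cos (k*x)) volume a b :=
  (Real.continuous_cos.comp (continuous_const.mul continuous_id)).intervalIntegrable _ _

lemma int_cos_freq (k : ℤ) (hk : k ≠ 0) : ∫ x in (0:ℝ)..2*π, Real.cos (k*x) = 0 := by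
  have hk' : (k:ℝ) ≠ 0 := Int.cast_ne_zero.mpr hk
  rw [intervalIntegral.integral_comp_mul_left Real.cos hk', integral_cos]
  have h1 : Real.sin ((k:ℝ)*(2*π)) = 0 := by
    rw [show (k:ℝ)*(2*π) = ((2*k:ℤ):ℝ)*π by push_cast; ring, Real.sin_int_mul_pi]
  simp [h1]

lemma sinsin (p q : ℤ) (hp : 1 ≤ p) (hq : 1 ≤ q) :
    ∫ x in (0:ℝ)..2*π, Real.sin (p*x) * Real.sin (q*x) = if p = q then π else 0 := by
  have key : ∀ x:ℝ, Real.sin (p*x) * Real.sin (q*x)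
      = (1/2) * Real.cos (((p-q:ℤ):ℝ)*x) - (1/2) * Real.cos (((p+q:ℤ):ℝ)*x) := by
    intro x
    push_cast
    rw [show ((p:ℝ)-q)*x = p*x - q*x by ring, show ((p:ℝ)+q)*x = p*x + q*x by ring,
      Real.cos_sub, Real.cos_add]
    ring
  rw [intervalIntegral.integral_congr (g := fun x => (1/2) * Real.cos (((p-q:ℤ):ℝ)*x)
      - (1/2) * Real.cos (((p+q:ℤ):ℝ)*x)) (fun x _ => key x),
    intervalIntegral.integral_sub ((ii_cos _ _ _).const_mul _) ((ii_cos _ _ _).const_mul _),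
    intervalIntegral.integral_const_mul, intervalIntegral.integral_const_mul,
    int_cos_freq (p+q) (by omega)]
  by_cases h : p = q
  · subst h
    simp only [sub_self, Int.cast_zero, zero_mul, Real.cos_zero, if_pos,
      intervalIntegral.integral_const, smul_eq_mul]
    simp
  · rw [int_cos_freq (p-q) (by omega)]
    simp [h]

lemma coscos (p q : ℤ) (hp : 1 ≤ p) (hq : 1 ≤ q) :
    ∫ x in (0:ℝ)..2*π, Real.cos (p*x) * Real.cos (q*x) = if p = q then π else 0 := by
  have key : ∀ x:ℝ, Real.cos (p*x) * Real.cos (q*x)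
      = (1/2) * Real.cos (((p-q:ℤ):ℝ)*x) + (1/2) * Real.cos (((p+q:ℤ):ℝ)*x) := by
    intro x
    push_cast
    rw [show ((p:ℝ)-q)*x = p*x - q*x by ring, show ((p:ℝ)+q)*x = p*x + q*x by ring,
      Real.cos_sub, Real.cos_add]
    ring
  rw [intervalIntegral.integral_congr (g := fun x => (1/2) * Real.cos (((p-q:ℤ):ℝ)*x)
      + (1/2) * Real.cos (((p+q:ℤ):ℝ)*x)) (fun x _ => key x),
    intervalIntegral.integral_add ((ii_cos _ _ _).const_mul _) ((ii_cos _ _ _).const_mul _),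
    intervalIntegral.integral_const_mul, intervalIntegral.integral_const_mul,
    int_cos_freq (p+q) (by omega)]
  by_cases h : p = q
  · subst h
    simp only [sub_self, Int.cast_zero, zero_mul, Real.cos_zero, if_pos,
      intervalIntegral.integral_const, smul_eq_mul]
    simp
  · rw [int_cos_freq (p-q) (by omega)]
    simp [h]

lemma cont_mode (c k : ℝ) (g : ℝ → ℝ) (hg : Continuous g) :
    Continuous (fun x : ℝ => c * g (k * x)) :=
  continuous_const.mul (hg.comp (continuous_const.mul continuous_id))

lemma orth_gen {k : ℕ} (p : Fin k → ℤ) (hp : ∀ i, 1 ≤ p i) (hinj : Function.Injective p)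
    (c d : Fin k → ℝ) (g : ℝ → ℝ) (hg : Continuous g)
    (hgint : ∀ i j : Fin k, ∫ x in (0:ℝ)..2*π, g ((p i : ℝ)*x) * g ((p j : ℝ)*x)
      = if p i = p j then π else 0) :
    ∫ x in (0:ℝ)..2*π, (∑ i, c i * g ((p i : ℝ) * x)) * (∑ j, d j * g ((p j : ℝ) * x))
      = π * ∑ i, c i * d i := by
  have h1 : ∀ x:ℝ, (∑ i, c i * g ((p i : ℝ) * x)) * (∑ j, d j * g ((p j : ℝ) * x))
      = ∑ i, ∑ j, (c i * d j) * (g ((p i : ℝ) * x) * g ((p j : ℝ) * x)) := by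
    intro x
    rw [Finset.sum_mul_sum]
    exact Finset.sum_congr rfl fun i _ => Finset.sum_congr rfl fun j _ => by ring
  rw [intervalIntegral.integral_congr (fun x _ => h1 x)]
  rw [intervalIntegral.integral_finset_sum (fun i _ =>
    (continuous_finset_sum _ (fun j _ => by fun_prop)).intervalIntegrable (μ := volume) 0 (2*π))]
  have h2 : ∀ i : Fin k, ∫ x in (0:ℝ)..2*π,
      (∑ j, (c i * d j) * (g ((p i : ℝ) * x) * g ((p j : ℝ) * x)))
      = ∑ j, (c i * d j) * (if p i = p j then π else 0) := by
    intro i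
    rw [intervalIntegral.integral_finset_sum (fun j _ =>
      ((by fun_prop : Continuous fun x : ℝ => c i * d j * (g ((p i : ℝ) * x) * g ((p j : ℝ) * x)))).intervalIntegrable (μ := volume) 0 (2*π))]
    exact Finset.sum_congr rfl fun j _ => by
      rw [intervalIntegral.integral_const_mul, hgint i j]
  simp only [h2]
  have h3 : ∀ i : Fin k, ∑ j, (c i * d j) * (if p i = p j then π else 0)
      = ∑ j, if i = j then c i * d j * π else 0 := by
    intro i
    refine Finset.sum_congr rfl fun j _ => ?_
    by_cases h : p i = p j
    · rw [if_pos h, if_pos (hinj h)]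
    · rw [if_neg h, if_neg (fun hh => h (by rw [hh]))]; ring
  simp only [h3, Finset.sum_ite_eq, Finset.mem_univ, if_pos]
  rw [Finset.mul_sum]
  exact Finset.sum_congr rfl fun i _ => by ring


lemma hd_sin (c A x : ℝ) : HasDerivAt (fun t => A * Real.sin (c*t)) (A * c * Real.cos (c*x)) x := by
  have h : HasDerivAt (fun t : ℝ => c * t) (c * 1) x := (hasDerivAt_id x).const_mul c
  have h3 := ((Real.hasDerivAt_sin (c*x)).comp x h).const_mul A
  exact h3.congr_deriv (by ring)

lemma hd_cos (c A x : ℝ) : HasDerivAt (fun t => A * Real.cos (c*t)) (-(A * c * Real.sin (c*x))) x := by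
  have h : HasDerivAt (fun t : ℝ => c * t) (c * 1) x := (hasDerivAt_id x).const_mul c
  have h3 := ((Real.hasDerivAt_cos (c*x)).comp x h).const_mul A
  exact h3.congr_deriv (by ring)

lemma final_ineq (M N a b : ℝ) (h1 : 1 ≤ N) (h2 : N + 1 ≤ M)
    (ha : a = -(4*M^2+1)/(16*M^4+24*M^2+1)) (hb : b = 1/(4*N^2+1)) :
    (N/4*(2+(2*M+1)*(a-b)))^2*((M+1)^2+N^2) + (N/4*(-2+(2*M-1)*(a-b)))^2*((M-1)^2+N^2)
    + (N/4*a*(2*M+1))^2*((3*M+1)^2+N^2) + (N/4*a*(2*M-1))^2*((3*M-1)^2+N^2)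
    + (N/4*b*(2*M-1))^2*((M+1)^2+9*N^2) + (N/4*b*(2*M+1))^2*((M-1)^2+9*N^2)
    - (M^2+N^2)*((N/4*(2+(2*M+1)*(a-b)))^2 + (N/4*(-2+(2*M-1)*(a-b)))^2
      + (N/4*a*(2*M+1))^2 + (N/4*a*(2*M-1))^2 + (N/4*b*(2*M-1))^2 + (N/4*b*(2*M+1))^2) < 0 := by
  have hD1 : (0:ℝ) < 16*M^4+24*M^2+1 := by positivity
  have hD2 : (0:ℝ) < 4*N^2+1 := by positivity
  subst ha hb
  have key : (N/4*(2+(2*M+1)*(-(4*M^2+1)/(16*M^4+24*M^2+1)-1/(4*N^2+1))))^2*((M+1)^2+N^2)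
      + (N/4*(-2+(2*M-1)*(-(4*M^2+1)/(16*M^4+24*M^2+1)-1/(4*N^2+1))))^2*((M-1)^2+N^2)
      + (N/4*(-(4*M^2+1)/(16*M^4+24*M^2+1))*(2*M+1))^2*((3*M+1)^2+N^2)
      + (N/4*(-(4*M^2+1)/(16*M^4+24*M^2+1))*(2*M-1))^2*((3*M-1)^2+N^2)
      + (N/4*(1/(4*N^2+1))*(2*M-1))^2*((M+1)^2+9*N^2)
      + (N/4*(1/(4*N^2+1))*(2*M+1))^2*((M-1)^2+9*N^2)
      - (M^2+N^2)*((N/4*(2+(2*M+1)*(-(4*M^2+1)/(16*M^4+24*M^2+1)-1/(4*N^2+1))))^2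
        + (N/4*(-2+(2*M-1)*(-(4*M^2+1)/(16*M^4+24*M^2+1)-1/(4*N^2+1))))^2
        + (N/4*(-(4*M^2+1)/(16*M^4+24*M^2+1))*(2*M+1))^2
        + (N/4*(-(4*M^2+1)/(16*M^4+24*M^2+1))*(2*M-1))^2
        + (N/4*(1/(4*N^2+1))*(2*M-1))^2 + (N/4*(1/(4*N^2+1))*(2*M+1))^2)
      = N^2 * ((4*N^2+1)*(16*M^4+40*M^2+1) - 4*M^2*(4*M^2+1)*(4*M^2+3))
        / (4*(16*M^4+24*M^2+1)*(4*N^2+1)) := by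
    field_simp
    ring
  have hG : (4*N^2+1)*(16*M^4+40*M^2+1) - 4*M^2*(4*M^2+1)*(4*M^2+3) < 0 := by
    nlinarith [sq_nonneg (M-1-N), sq_nonneg (M-2), sq_nonneg M, sq_nonneg (M*(M-2)),
      mul_le_mul_of_nonneg_right (show 4*N^2+1 ≤ 4*(M-1)^2+1 by nlinarith)
        (show (0:ℝ) ≤ 16*M^4+40*M^2+1 by positivity), sq_nonneg (M^2-2*M)]
  have hN2 : (0:ℝ) < N^2 := by nlinarith
  rw [key]
  exact div_neg_of_neg_of_pos (mul_neg_of_pos_of_neg hN2 hG) (by positivity)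


/-- The explicit variation for the off-diagonal case `m > n`. -/
theorem misiolek_offdiagonal (m n : ℕ) (hn : 0 < n) (hmn : n < m) :
    let a₀ : ℝ := -(4 * (m : ℝ) ^ 2 + 1) / (16 * (m : ℝ) ^ 4 + 24 * (m : ℝ) ^ 2 + 1)
    let b₀ : ℝ := 1 / (4 * (n : ℝ) ^ 2 + 1)
    let ψ : ℝ → ℝ → ℝ := fun x y => -(Real.cos (m * x) * Real.cos (n * y))
    let f : ℝ → ℝ → ℝ := fun x y =>
      Real.cos x * (1 + a₀ * Real.cos (2 * m * x) + b₀ * Real.cos (2 * n * y))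
    MI ((m : ℝ) ^ 2 + (n : ℝ) ^ 2) (pb ψ f) < 0 := by
  intro a₀ b₀ ψ f
  have hm2 : 2 ≤ m := by omega
  set p : Fin 4 → ℤ := ![(m:ℤ)+1, (m:ℤ)-1, 3*(m:ℤ)+1, 3*(m:ℤ)-1] with hp_def
  set A : Fin 4 → ℝ := ![(n:ℝ)/4*(2+(2*(m:ℝ)+1)*(a₀-b₀)), (n:ℝ)/4*(-2+(2*(m:ℝ)-1)*(a₀-b₀)),
    (n:ℝ)/4*a₀*(2*(m:ℝ)+1), (n:ℝ)/4*a₀*(2*(m:ℝ)-1)] with hA_def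
  set B : Fin 4 → ℝ := ![-((n:ℝ)/4*b₀*(2*(m:ℝ)-1)), -((n:ℝ)/4*b₀*(2*(m:ℝ)+1)), 0, 0] with hB_def
  set P : ℝ → ℝ := fun x => ∑ i, A i * Real.sin ((p i : ℝ) * x) with hP_def
  set Q : ℝ → ℝ := fun x => ∑ i, B i * Real.sin ((p i : ℝ) * x) with hQ_def
  set P' : ℝ → ℝ := fun x => ∑ i, A i * (p i : ℝ) * Real.cos ((p i : ℝ) * x) with hP'_def
  set Q' : ℝ → ℝ := fun x => ∑ i, B i * (p i : ℝ) * Real.cos ((p i : ℝ) * x) with hQ'_def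
  set φ₀ : ℝ → ℝ → ℝ := fun x y => P x * Real.sin ((n:ℝ)*y) + Q x * Real.sin (3*(n:ℝ)*y) with hφ₀_def
  have hφ : pb ψ f = φ₀ := by
    funext x y
    have d1 : pdx ψ x y = -(-Real.cos ((n:ℝ)*y) * (m:ℝ) * Real.sin ((m:ℝ)*x)) := by
      show deriv (fun t => ψ t y) x = _
      have he : (fun t => ψ t y) = (fun t => -Real.cos ((n:ℝ)*y) * Real.cos ((m:ℝ)*t)) := by
        funext t; show -(Real.cos ((m:ℝ)*t) * Real.cos ((n:ℝ)*y)) = _; ring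
      rw [he]
      exact (hd_cos _ _ _).deriv
    have d2 : pdy ψ x y = -(-Real.cos ((m:ℝ)*x) * (n:ℝ) * Real.sin ((n:ℝ)*y)) := by
      show deriv (fun t => ψ x t) y = _
      have he : (fun t => ψ x t) = (fun t => -Real.cos ((m:ℝ)*x) * Real.cos ((n:ℝ)*t)) := by
        funext t; show -(Real.cos ((m:ℝ)*x) * Real.cos ((n:ℝ)*t)) = _; ring
      rw [he]
      exact (hd_cos _ _ _).deriv
    have d3 : pdy f x y = -(Real.cos x * b₀ * (2*(n:ℝ)) * Real.sin (2*(n:ℝ)*y)) := by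
      show deriv (fun t => f x t) y = _
      have he : (fun t => f x t) = (fun t => (Real.cos x * (1 + a₀ * Real.cos (2*(m:ℝ)*x)))
          + (Real.cos x * b₀) * Real.cos (2*(n:ℝ)*t)) := by
        funext t
        show Real.cos x * (1 + a₀ * Real.cos (2*(m:ℝ)*x) + b₀ * Real.cos (2*(n:ℝ)*t)) = _
        ring
      rw [he]
      exact ((hd_cos (2*(n:ℝ)) (Real.cos x * b₀) y).const_add _).deriv
    have d4 : pdx f x y = -Real.sin x * (1 + a₀ * Real.cos (2*(m:ℝ)*x) + b₀ * Real.cos (2*(n:ℝ)*y))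
        + Real.cos x * (-(a₀ * (2*(m:ℝ)) * Real.sin (2*(m:ℝ)*x))) := by
      show deriv (fun t => f t y) x = _
      exact ((Real.hasDerivAt_cos x).mul (((hd_cos (2*(m:ℝ)) a₀ x).const_add 1).add_const
        (b₀ * Real.cos (2*(n:ℝ)*y)))).deriv
    show pdx ψ x y * pdy f x y - pdy ψ x y * pdx f x y = _
    rw [d1, d2, d3, d4]
    simp only [hφ₀_def, hP_def, hQ_def, hA_def, hB_def, hp_def, Fin.sum_univ_four,
      Matrix.cons_val_zero, Matrix.cons_val_one, Matrix.head_cons, Matrix.cons_val_two,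
      Matrix.tail_cons, Matrix.cons_val_three]
    push_cast
    have hx1 : Real.sin (((m:ℝ)+1)*x) = Real.sin ((m:ℝ)*x)*Real.cos x + Real.cos ((m:ℝ)*x)*Real.sin x := by
      rw [show ((m:ℝ)+1)*x = (m:ℝ)*x + x by ring, Real.sin_add]
    have hx2 : Real.sin (((m:ℝ)-1)*x) = Real.sin ((m:ℝ)*x)*Real.cos x - Real.cos ((m:ℝ)*x)*Real.sin x := by
      rw [show ((m:ℝ)-1)*x = (m:ℝ)*x - x by ring, Real.sin_sub]
    have hx3 : Real.sin ((3*(m:ℝ)+1)*x) = (Real.sin ((m:ℝ)*x)*Real.cos x + Real.cos ((m:ℝ)*x)*Real.sin x)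
          *(2*Real.cos ((m:ℝ)*x)^2-1)
        + (Real.cos ((m:ℝ)*x)*Real.cos x - Real.sin ((m:ℝ)*x)*Real.sin x)
          *(2*Real.sin ((m:ℝ)*x)*Real.cos ((m:ℝ)*x)) := by
      rw [show (3*(m:ℝ)+1)*x = ((m:ℝ)*x + x) + 2*((m:ℝ)*x) by ring, Real.sin_add ((m:ℝ)*x + x),
        Real.sin_add, Real.cos_add, Real.sin_two_mul, Real.cos_two_mul]
    have hx4 : Real.sin ((3*(m:ℝ)-1)*x) = (Real.sin ((m:ℝ)*x)*Real.cos x - Real.cos ((m:ℝ)*x)*Real.sin x)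
          *(2*Real.cos ((m:ℝ)*x)^2-1)
        + (Real.cos ((m:ℝ)*x)*Real.cos x + Real.sin ((m:ℝ)*x)*Real.sin x)
          *(2*Real.sin ((m:ℝ)*x)*Real.cos ((m:ℝ)*x)) := by
      rw [show (3*(m:ℝ)-1)*x = ((m:ℝ)*x - x) + 2*((m:ℝ)*x) by ring, Real.sin_add ((m:ℝ)*x - x),
        Real.sin_sub, Real.cos_sub, Real.sin_two_mul, Real.cos_two_mul]
    have hy3 : Real.sin (3*(n:ℝ)*y) = Real.sin ((n:ℝ)*y)*(2*Real.cos ((n:ℝ)*y)^2-1)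
        + Real.cos ((n:ℝ)*y)*(2*Real.sin ((n:ℝ)*y)*Real.cos ((n:ℝ)*y)) := by
      rw [show 3*(n:ℝ)*y = (n:ℝ)*y + 2*((n:ℝ)*y) by ring, Real.sin_add, Real.sin_two_mul,
        Real.cos_two_mul]
    have hr1 : Real.cos (2*(m:ℝ)*x) = Real.cos ((m:ℝ)*x)^2 - Real.sin ((m:ℝ)*x)^2 := by
      rw [show 2*(m:ℝ)*x = 2*((m:ℝ)*x) by ring, Real.cos_two_mul']
    have hr2 : Real.sin (2*(m:ℝ)*x) = 2*Real.sin ((m:ℝ)*x)*Real.cos ((m:ℝ)*x) := by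
      rw [show 2*(m:ℝ)*x = 2*((m:ℝ)*x) by ring, Real.sin_two_mul]
    have hr3 : Real.cos (2*(n:ℝ)*y) = 2*Real.cos ((n:ℝ)*y)^2 - 1 := by
      rw [show 2*(n:ℝ)*y = 2*((n:ℝ)*y) by ring, Real.cos_two_mul]
    have hr4 : Real.sin (2*(n:ℝ)*y) = 2*Real.sin ((n:ℝ)*y)*Real.cos ((n:ℝ)*y) := by
      rw [show 2*(n:ℝ)*y = 2*((n:ℝ)*y) by ring, Real.sin_two_mul]
    rw [hx1, hx2, hx3, hx4, hy3, hr1, hr2, hr3, hr4]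
    ring
  rw [hφ]
  set lam : ℝ := (m:ℝ)^2 + (n:ℝ)^2 with hlam
  have hv0 : p 0 = (m:ℤ)+1 := rfl
  have hv1 : p 1 = (m:ℤ)-1 := rfl
  have hv2 : p 2 = 3*(m:ℤ)+1 := rfl
  have hv3 : p 3 = 3*(m:ℤ)-1 := rfl
  have h4 : ∀ i : Fin 4, i = 0 ∨ i = 1 ∨ i = 2 ∨ i = 3 := by decide
  have hp1 : ∀ i, 1 ≤ p i := by
    intro i
    rcases h4 i with rfl|rfl|rfl|rfl
    · rw [hv0]; omega
    · rw [hv1]; omega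
    · rw [hv2]; omega
    · rw [hv3]; omega
  have hpinj : Function.Injective p := by
    intro i j h
    rcases h4 i with rfl|rfl|rfl|rfl <;> rcases h4 j with rfl|rfl|rfl|rfl <;>
      simp only [hv0, hv1, hv2, hv3] at h <;> first | rfl | omega
  have hPc : Continuous P := by
    rw [hP_def]; exact continuous_finset_sum _ (fun i _ => by fun_prop)
  have hQc : Continuous Q := by
    rw [hQ_def]; exact continuous_finset_sum _ (fun i _ => by fun_prop)
  have hP'c : Continuous P' := by
    rw [hP'_def]; exact continuous_finset_sum _ (fun i _ => by fun_prop)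
  have hQ'c : Continuous Q' := by
    rw [hQ'_def]; exact continuous_finset_sum _ (fun i _ => by fun_prop)
  have hPd : ∀ x, HasDerivAt P (P' x) x := by
    intro x
    rw [hP_def, hP'_def]
    exact HasDerivAt.fun_sum (fun i _ => hd_sin _ _ x)
  have hQd : ∀ x, HasDerivAt Q (Q' x) x := by
    intro x
    rw [hQ_def, hQ'_def]
    exact HasDerivAt.fun_sum (fun i _ => hd_sin _ _ x)
  have hφ₀app : ∀ x y, φ₀ x y = P x * Real.sin ((n:ℝ)*y) + Q x * Real.sin (3*(n:ℝ)*y) :=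
    fun _ _ => rfl
  have hpdx : ∀ x y, pdx φ₀ x y = P' x * Real.sin ((n:ℝ)*y) + Q' x * Real.sin (3*(n:ℝ)*y) := by
    intro x y
    show deriv (fun t => φ₀ t y) x = _
    have he : (fun t => φ₀ t y)
        = (fun t => P t * Real.sin ((n:ℝ)*y) + Q t * Real.sin (3*(n:ℝ)*y)) := rfl
    rw [he]
    exact (((hPd x).mul_const _).add ((hQd x).mul_const _)).deriv
  have hpdy : ∀ x y, pdy φ₀ x y = P x * (n:ℝ) * Real.cos ((n:ℝ)*y)
      + Q x * (3*(n:ℝ)) * Real.cos (3*(n:ℝ)*y) := by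
    intro x y
    show deriv (fun t => φ₀ x t) y = _
    have he : (fun t => φ₀ x t)
        = (fun t => P x * Real.sin ((n:ℝ)*t) + Q x * Real.sin (3*(n:ℝ)*t)) := rfl
    rw [he]
    exact ((hd_sin ((n:ℝ)) (P x) y).add (hd_sin (3*(n:ℝ)) (Q x) y)).deriv
  have hii : ∀ (c : ℝ) (F G : ℝ → ℝ), Continuous F → Continuous G →
      IntervalIntegrable (fun x => c * (F x * G x)) volume 0 (2*π) :=
    fun c F G hF hG => (continuous_const.mul (hF.mul hG)).intervalIntegrable _ _
  have iPP : ∫ x in (0:ℝ)..2*π, P x * P x = π * ∑ i, A i * A i :=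
    orth_gen p hp1 hpinj A A Real.sin Real.continuous_sin (fun i j => sinsin _ _ (hp1 i) (hp1 j))
  have iPQ : ∫ x in (0:ℝ)..2*π, P x * Q x = π * ∑ i, A i * B i :=
    orth_gen p hp1 hpinj A B Real.sin Real.continuous_sin (fun i j => sinsin _ _ (hp1 i) (hp1 j))
  have iQQ : ∫ x in (0:ℝ)..2*π, Q x * Q x = π * ∑ i, B i * B i :=
    orth_gen p hp1 hpinj B B Real.sin Real.continuous_sin (fun i j => sinsin _ _ (hp1 i) (hp1 j))
  have iP'P' : ∫ x in (0:ℝ)..2*π, P' x * P' x = π * ∑ i, (A i * (p i:ℝ)) * (A i * (p i:ℝ)) :=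
    orth_gen p hp1 hpinj (fun i => A i * (p i:ℝ)) (fun i => A i * (p i:ℝ)) Real.cos
      Real.continuous_cos (fun i j => coscos _ _ (hp1 i) (hp1 j))
  have iP'Q' : ∫ x in (0:ℝ)..2*π, P' x * Q' x = π * ∑ i, (A i * (p i:ℝ)) * (B i * (p i:ℝ)) :=
    orth_gen p hp1 hpinj (fun i => A i * (p i:ℝ)) (fun i => B i * (p i:ℝ)) Real.cos
      Real.continuous_cos (fun i j => coscos _ _ (hp1 i) (hp1 j))
  have iQ'Q' : ∫ x in (0:ℝ)..2*π, Q' x * Q' x = π * ∑ i, (B i * (p i:ℝ)) * (B i * (p i:ℝ)) :=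
    orth_gen p hp1 hpinj (fun i => B i * (p i:ℝ)) (fun i => B i * (p i:ℝ)) Real.cos
      Real.continuous_cos (fun i j => coscos _ _ (hp1 i) (hp1 j))
  have hgall : ∀ y x, pdx φ₀ x y ^2 + pdy φ₀ x y ^2 - lam * φ₀ x y ^2
      = (Real.sin ((n:ℝ)*y) * Real.sin ((n:ℝ)*y)) * (P' x * P' x)
      + (2 * (Real.sin ((n:ℝ)*y) * Real.sin (3*(n:ℝ)*y))) * (P' x * Q' x)
      + (Real.sin (3*(n:ℝ)*y) * Real.sin (3*(n:ℝ)*y)) * (Q' x * Q' x)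
      + ((n:ℝ)^2 * (Real.cos ((n:ℝ)*y) * Real.cos ((n:ℝ)*y))
          - lam * (Real.sin ((n:ℝ)*y) * Real.sin ((n:ℝ)*y))) * (P x * P x)
      + (6*(n:ℝ)^2 * (Real.cos ((n:ℝ)*y) * Real.cos (3*(n:ℝ)*y))
          - 2*lam*(Real.sin ((n:ℝ)*y) * Real.sin (3*(n:ℝ)*y))) * (P x * Q x)
      + (9*(n:ℝ)^2 * (Real.cos (3*(n:ℝ)*y) * Real.cos (3*(n:ℝ)*y))
          - lam*(Real.sin (3*(n:ℝ)*y) * Real.sin (3*(n:ℝ)*y))) * (Q x * Q x) := by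
    intro y x
    rw [hpdx, hpdy, hφ₀app]
    ring
  have inner : ∀ y, (∫ x in (0:ℝ)..2*π, (pdx φ₀ x y ^2 + pdy φ₀ x y ^2 - lam * φ₀ x y ^2))
      = (π * ((∑ i, (A i * (p i:ℝ)) * (A i * (p i:ℝ))) - lam * ∑ i, A i * A i))
          * (Real.sin ((n:ℝ)*y) * Real.sin ((n:ℝ)*y))
      + (π * (2*(∑ i, (A i * (p i:ℝ)) * (B i * (p i:ℝ))) - 2*lam*∑ i, A i * B i))
          * (Real.sin ((n:ℝ)*y) * Real.sin (3*(n:ℝ)*y))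
      + (π * ((∑ i, (B i * (p i:ℝ)) * (B i * (p i:ℝ))) - lam * ∑ i, B i * B i))
          * (Real.sin (3*(n:ℝ)*y) * Real.sin (3*(n:ℝ)*y))
      + (π * ((n:ℝ)^2 * ∑ i, A i * A i)) * (Real.cos ((n:ℝ)*y) * Real.cos ((n:ℝ)*y))
      + (π * (6*(n:ℝ)^2 * ∑ i, A i * B i)) * (Real.cos ((n:ℝ)*y) * Real.cos (3*(n:ℝ)*y))
      + (π * (9*(n:ℝ)^2 * ∑ i, B i * B i)) * (Real.cos (3*(n:ℝ)*y) * Real.cos (3*(n:ℝ)*y)) := by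
    intro y
    simp only [hgall y]
    rw [intervalIntegral.integral_add (((((hii _ _ _ hP'c hP'c).add (hii _ _ _ hP'c hQ'c)).add
        (hii _ _ _ hQ'c hQ'c)).add (hii _ _ _ hPc hPc)).add (hii _ _ _ hPc hQc)) (hii _ _ _ hQc hQc),
      intervalIntegral.integral_add ((((hii _ _ _ hP'c hP'c).add (hii _ _ _ hP'c hQ'c)).add
        (hii _ _ _ hQ'c hQ'c)).add (hii _ _ _ hPc hPc)) (hii _ _ _ hPc hQc),
      intervalIntegral.integral_add (((hii _ _ _ hP'c hP'c).add (hii _ _ _ hP'c hQ'c)).add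
        (hii _ _ _ hQ'c hQ'c)) (hii _ _ _ hPc hPc),
      intervalIntegral.integral_add ((hii _ _ _ hP'c hP'c).add (hii _ _ _ hP'c hQ'c))
        (hii _ _ _ hQ'c hQ'c),
      intervalIntegral.integral_add (hii _ _ _ hP'c hP'c) (hii _ _ _ hP'c hQ'c),
      intervalIntegral.integral_const_mul, intervalIntegral.integral_const_mul,
      intervalIntegral.integral_const_mul, intervalIntegral.integral_const_mul,
      intervalIntegral.integral_const_mul, intervalIntegral.integral_const_mul,
      iPP, iPQ, iQQ, iP'P', iP'Q', iQ'Q']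
    ring
  have e1 : ∫ y in (0:ℝ)..2*π, Real.sin ((n:ℝ)*y) * Real.sin ((n:ℝ)*y) = π := by
    have h := sinsin (n:ℤ) (n:ℤ) (by omega) (by omega)
    rw [if_pos rfl] at h
    push_cast at h
    exact h
  have e2 : ∫ y in (0:ℝ)..2*π, Real.sin ((n:ℝ)*y) * Real.sin (3*(n:ℝ)*y) = 0 := by
    have h := sinsin (n:ℤ) (3*(n:ℤ)) (by omega) (by omega)
    rw [if_neg (by omega)] at h
    push_cast at h
    exact h
  have e3 : ∫ y in (0:ℝ)..2*π, Real.sin (3*(n:ℝ)*y) * Real.sin (3*(n:ℝ)*y) = π := by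
    have h := sinsin (3*(n:ℤ)) (3*(n:ℤ)) (by omega) (by omega)
    rw [if_pos rfl] at h
    push_cast at h
    exact h
  have e4 : ∫ y in (0:ℝ)..2*π, Real.cos ((n:ℝ)*y) * Real.cos ((n:ℝ)*y) = π := by
    have h := coscos (n:ℤ) (n:ℤ) (by omega) (by omega)
    rw [if_pos rfl] at h
    push_cast at h
    exact h
  have e5 : ∫ y in (0:ℝ)..2*π, Real.cos ((n:ℝ)*y) * Real.cos (3*(n:ℝ)*y) = 0 := by
    have h := coscos (n:ℤ) (3*(n:ℤ)) (by omega) (by omega)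
    rw [if_neg (by omega)] at h
    push_cast at h
    exact h
  have e6 : ∫ y in (0:ℝ)..2*π, Real.cos (3*(n:ℝ)*y) * Real.cos (3*(n:ℝ)*y) = π := by
    have h := coscos (3*(n:ℤ)) (3*(n:ℤ)) (by omega) (by omega)
    rw [if_pos rfl] at h
    push_cast at h
    exact h
  have hsn : Continuous (fun y : ℝ => Real.sin ((n:ℝ)*y)) := by fun_prop
  have hs3n : Continuous (fun y : ℝ => Real.sin (3*(n:ℝ)*y)) := by fun_prop
  have hcn : Continuous (fun y : ℝ => Real.cos ((n:ℝ)*y)) := by fun_prop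
  have hc3n : Continuous (fun y : ℝ => Real.cos (3*(n:ℝ)*y)) := by fun_prop
  have houter : MI lam φ₀
      = (π * ((∑ i, (A i * (p i:ℝ)) * (A i * (p i:ℝ))) - lam * ∑ i, A i * A i)) * π
      + (π * ((∑ i, (B i * (p i:ℝ)) * (B i * (p i:ℝ))) - lam * ∑ i, B i * B i)) * π
      + (π * ((n:ℝ)^2 * ∑ i, A i * A i)) * π
      + (π * (9*(n:ℝ)^2 * ∑ i, B i * B i)) * π := by
    show (∫ y in (0:ℝ)..(2*π), ∫ x in (0:ℝ)..(2*π),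
      (pdx φ₀ x y ^ 2 + pdy φ₀ x y ^ 2 - lam * φ₀ x y ^ 2)) = _
    simp only [inner]
    rw [intervalIntegral.integral_add (((((hii _ _ _ hsn hsn).add (hii _ _ _ hsn hs3n)).add
        (hii _ _ _ hs3n hs3n)).add (hii _ _ _ hcn hcn)).add (hii _ _ _ hcn hc3n))
        (hii _ _ _ hc3n hc3n),
      intervalIntegral.integral_add ((((hii _ _ _ hsn hsn).add (hii _ _ _ hsn hs3n)).add
        (hii _ _ _ hs3n hs3n)).add (hii _ _ _ hcn hcn)) (hii _ _ _ hcn hc3n),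
      intervalIntegral.integral_add (((hii _ _ _ hsn hsn).add (hii _ _ _ hsn hs3n)).add
        (hii _ _ _ hs3n hs3n)) (hii _ _ _ hcn hcn),
      intervalIntegral.integral_add ((hii _ _ _ hsn hsn).add (hii _ _ _ hsn hs3n))
        (hii _ _ _ hs3n hs3n),
      intervalIntegral.integral_add (hii _ _ _ hsn hsn) (hii _ _ _ hsn hs3n),
      intervalIntegral.integral_const_mul, intervalIntegral.integral_const_mul,
      intervalIntegral.integral_const_mul, intervalIntegral.integral_const_mul,
      intervalIntegral.integral_const_mul, intervalIntegral.integral_const_mul,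
      e1, e2, e3, e4, e5, e6]
    ring
  have hA0 : A 0 = (n:ℝ)/4*(2+(2*(m:ℝ)+1)*(a₀-b₀)) := rfl
  have hA1 : A 1 = (n:ℝ)/4*(-2+(2*(m:ℝ)-1)*(a₀-b₀)) := rfl
  have hA2 : A 2 = (n:ℝ)/4*a₀*(2*(m:ℝ)+1) := rfl
  have hA3 : A 3 = (n:ℝ)/4*a₀*(2*(m:ℝ)-1) := rfl
  have hB0 : B 0 = -((n:ℝ)/4*b₀*(2*(m:ℝ)-1)) := rfl
  have hB1 : B 1 = -((n:ℝ)/4*b₀*(2*(m:ℝ)+1)) := rfl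
  have hB2 : B 2 = 0 := rfl
  have hB3 : B 3 = 0 := rfl
  have h1N : (1:ℝ) ≤ (n:ℝ) := by exact_mod_cast hn
  have h2M : (n:ℝ) + 1 ≤ (m:ℝ) := by
    have : n + 1 ≤ m := hmn
    exact_mod_cast this
  have hfin := final_ineq (m:ℝ) (n:ℝ) a₀ b₀ h1N h2M rfl rfl
  rw [houter]
  have hrw : (π * ((∑ i, (A i * (p i:ℝ)) * (A i * (p i:ℝ))) - lam * ∑ i, A i * A i)) * π
      + (π * ((∑ i, (B i * (p i:ℝ)) * (B i * (p i:ℝ))) - lam * ∑ i, B i * B i)) * π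
      + (π * ((n:ℝ)^2 * ∑ i, A i * A i)) * π
      + (π * (9*(n:ℝ)^2 * ∑ i, B i * B i)) * π
      = π^2 * (((n:ℝ)/4*(2+(2*(m:ℝ)+1)*(a₀-b₀)))^2*(((m:ℝ)+1)^2+(n:ℝ)^2)
        + ((n:ℝ)/4*(-2+(2*(m:ℝ)-1)*(a₀-b₀)))^2*(((m:ℝ)-1)^2+(n:ℝ)^2)
        + ((n:ℝ)/4*a₀*(2*(m:ℝ)+1))^2*((3*(m:ℝ)+1)^2+(n:ℝ)^2)
        + ((n:ℝ)/4*a₀*(2*(m:ℝ)-1))^2*((3*(m:ℝ)-1)^2+(n:ℝ)^2)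
        + ((n:ℝ)/4*b₀*(2*(m:ℝ)-1))^2*(((m:ℝ)+1)^2+9*(n:ℝ)^2)
        + ((n:ℝ)/4*b₀*(2*(m:ℝ)+1))^2*(((m:ℝ)-1)^2+9*(n:ℝ)^2)
        - ((m:ℝ)^2+(n:ℝ)^2)*(((n:ℝ)/4*(2+(2*(m:ℝ)+1)*(a₀-b₀)))^2
          + ((n:ℝ)/4*(-2+(2*(m:ℝ)-1)*(a₀-b₀)))^2
          + ((n:ℝ)/4*a₀*(2*(m:ℝ)+1))^2 + ((n:ℝ)/4*a₀*(2*(m:ℝ)-1))^2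
          + ((n:ℝ)/4*b₀*(2*(m:ℝ)-1))^2 + ((n:ℝ)/4*b₀*(2*(m:ℝ)+1))^2)) := by
    simp only [Fin.sum_univ_four, hv0, hv1, hv2, hv3, hA0, hA1, hA2, hA3, hB0, hB1, hB2, hB3, hlam]
    push_cast
    ring
  rw [hrw]
  exact mul_neg_of_pos_of_neg (by positivity) hfin
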